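/- arXiv:0902.4441 — 4 statements merged into one kernel-verified Lean document; each statement's English description precedes it below -/
import Mathlib

section
/- For every partition λ and every integer i ≥ 1, (λ')^{(i)} = (λ^{(−i)})', where λ' denotes the conjugate partition of λ. -/
open scoped BigOperators
open scoped Classical

namespace Paper

/-! ### Partitions

A partition `λ = (λ_1 ≥ λ_2 ≥ ⋯ ≥ λ_n > 0)` is encoded as the weakly decreasing,
eventually-zero function `f : ℕ → ℕ` with `f k = λ_{k+1}` (0-based indexing of parts,
parts beyond the length being `0`). -/

def IsPartition (f : ℕ → ℕ) : Prop :=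
  (∀ ⦃i j : ℕ⦄, i ≤ j → f j ≤ f i) ∧ ∃ N, ∀ k, N ≤ k → f k = 0

/-- `|λ|`, the size of the partition. -/
noncomputable def psize (f : ℕ → ℕ) : ℕ := ∑ᶠ k, f k

/-- `u_i(λ) = #{k ≥ 1 : λ_k ≥ i}`, the number of parts of `λ` that are at least `i`. -/
noncomputable def numParts (f : ℕ → ℕ) (i : ℕ) : ℕ := Nat.card {k | i ≤ f k}

/-- `l(λ)`, the number of (positive) parts. -/
noncomputable def plength (f : ℕ → ℕ) : ℕ := numParts f 1

/-- The conjugate partition: `λ'_i = #{k : λ_k ≥ i}` (0-based: `conj f i = λ'_{i+1}`). -/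
noncomputable def conj (f : ℕ → ℕ) : ℕ → ℕ := fun i => numParts f (i + 1)

/-- `λ^{(i)} = (λ_1 − 1, …, λ_j − 1, i − 1, λ_{j+1}, …, λ_n)` where `j = u_i(λ)` is the
unique index with `λ_j ≥ i > λ_{j+1}` (switch the `i`-th R of the code to U). -/
noncomputable def swR (f : ℕ → ℕ) (i : ℕ) : ℕ → ℕ := fun k =>
  if k < numParts f i then f k - 1
  else if k = numParts f i then i - 1
  else f (k - 1)

/-- `λ^{(−i)} = (λ_1 + 1, …, λ_{i−1} + 1, λ_{i+1}, λ_{i+2}, …)` (switch the `i`-th U of the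
code, from the right, to R). -/
def swU (f : ℕ → ℕ) (i : ℕ) : ℕ → ℕ := fun k =>
  if k + 1 < i then f k + 1 else f (k + 1)

/-! ### Strips, the sets `𝓡_{λ,μ}` and the signed counts `R_{λ,μ}` -/

/-- `λ − ν` is a vertical strip (at most one square per row); includes `ν ⊆ λ`. -/
def VStrip (f g : ℕ → ℕ) : Prop := ∀ k, g k ≤ f k ∧ f k ≤ g k + 1

/-- `μ − ν` is a horizontal strip (at most one square per column); includes `ν ⊆ μ`. -/
def HStrip (f g : ℕ → ℕ) : Prop := ∀ k, f (k + 1) ≤ g k ∧ g k ≤ f k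

/-- `𝓡_{λ,μ}`: partitions `ν` with `λ − ν` a vertical strip and `μ − ν` a horizontal strip. -/
def RSet (l m : ℕ → ℕ) : Set (ℕ → ℕ) :=
  {nu | IsPartition nu ∧ VStrip l nu ∧ HStrip m nu}

/-- `R_{λ,μ} = Σ_{ν ∈ 𝓡_{λ,μ}} (−1)^{|λ|−|ν|}` (zero when the set is empty). -/
noncomputable def Rnum (l m : ℕ → ℕ) : ℤ :=
  ∑ᶠ nu ∈ RSet l m, (-1 : ℤ) ^ (psize l - psize nu)

/-- The square in row `r`, column `c` (0-based) is a `λ`-ambiguous square of `μ`: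
it lies in both diagrams, is rightmost in its row of `λ` and bottommost in its column of `μ`. -/
def Ambiguous (l m : ℕ → ℕ) (r c : ℕ) : Prop :=
  c + 1 = l r ∧ m (r + 1) ≤ c ∧ c + 1 ≤ m r

/-- `μ` is a `λ`-survivor: `𝓡_{λ,μ}` is nonempty and `μ` has no `λ`-ambiguous squares. -/
def Survivor (l m : ℕ → ℕ) : Prop :=
  (RSet l m).Nonempty ∧ ∀ r c, ¬ Ambiguous l m r c

noncomputable section

/-! ### The algebra of symmetric functions

`Λ_ℚ = ℚ[p_1, p_2, …]` realized as `MvPolynomial ℕ ℚ`, the variable `X k`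
representing the power sum `p_{k+1}`. -/

abbrev SymAlg : Type := MvPolynomial ℕ ℚ

/-- The power sum `p_n` (with `p_0 = 1`). -/
def pp (n : ℕ) : SymAlg := if n = 0 then 1 else MvPolynomial.X (n - 1)

/-- `p_λ` for a multiset of parts. -/
def pMul (s : Multiset ℕ) : SymAlg := (s.map pp).prod

/-- `|Aut λ| = ∏_j f_j!` for a multiset with multiplicities `f_j`. -/
def autF (s : Multiset ℕ) : ℕ := (s.dedup.map fun v => (s.count v).factorial).prod

/-- `z_λ = ∏_j j^{f_j} f_j!`. -/
def zee (s : Multiset ℕ) : ℕ := s.prod * autF s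

/-- The complete symmetric function `h_n = Σ_{λ ⊢ n} z_λ^{-1} p_λ`
(equivalently, `Σ_n h_n t^n = exp Σ_{k≥1} p_k t^k / k`). -/
def hh (n : ℕ) : SymAlg :=
  ∑ P : Nat.Partition n, ((zee P.parts : ℚ)⁻¹) • pMul P.parts

/-- The elementary symmetric function `e_n = Σ_{λ ⊢ n} (−1)^{n−l(λ)} z_λ^{-1} p_λ`
(equivalently, `Σ_n e_n t^n = exp Σ_{k≥1} (−1)^{k−1} p_k t^k / k`). -/
def ee (n : ℕ) : SymAlg :=
  ∑ P : Nat.Partition n,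
    (((-1 : ℚ) ^ (n - Multiset.card P.parts)) * (zee P.parts : ℚ)⁻¹) • pMul P.parts

/-- `perp f g = f^⊥ g`: the adjoint of multiplication by `f` with respect to the Hall
inner product, given explicitly by substituting `p_n^⊥ = n ∂/∂p_n` multiplicatively in `f`. -/
def perp (f g : SymAlg) : SymAlg :=
  ∑ m ∈ f.support, ∑ m' ∈ g.support,
    (MvPolynomial.coeff m f * MvPolynomial.coeff m' g *
      m.prod fun k a => ((k + 1 : ℚ)) ^ a * ((m' k).descFactorial a : ℚ)) •
      (MvPolynomial.monomial (m' - m) (1 : ℚ))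

/-- The weight (degree in the `x`'s) of a `p`-monomial: `p_1^{a_1} p_2^{a_2} ⋯ ↦ Σ k a_k`. -/
def wtm (m : ℕ →₀ ℕ) : ℕ := m.sum fun k a => (k + 1) * a

/-- The maximal weight of a monomial of `f`. -/
def wt (f : SymAlg) : ℕ := f.support.sup wtm

/-- The Bernstein operator `B_n = Σ_{m ≥ 0, n+m ≥ 0} (−1)^m h_{n+m} e_m^⊥`
(the sum is finite on each `f`: terms with `m > wt f` act as zero, which justifies
the truncation). -/
def BOp (n : ℤ) (f : SymAlg) : SymAlg :=
  ∑ m ∈ Finset.range (wt f + 1),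
    if 0 ≤ n + (m : ℤ) then
      ((-1 : ℚ) ^ m) • (hh (n + (m : ℤ)).toNat * perp (ee m) f)
    else 0

/-- The adjoint Bernstein operator `B_n^⊥ = Σ_{m ≥ 0, n+m ≥ 0} (−1)^m e_m h_{n+m}^⊥`. -/
def BpOp (n : ℤ) (f : SymAlg) : SymAlg :=
  ∑ m ∈ Finset.range (wt f + (-n).toNat + 1),
    if 0 ≤ n + (m : ℤ) then
      ((-1 : ℚ) ^ m) • (ee m * perp (hh (n + (m : ℤ)).toNat) f)
    else 0

/-- The involution `ω` of `Λ_ℚ` (with `ω e_n = h_n`); on power sums,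
`ω p_n = (−1)^{n−1} p_n`. -/
def omegaMap : SymAlg →ₐ[ℚ] SymAlg :=
  MvPolynomial.aeval fun k => ((-1 : ℚ) ^ k) • MvPolynomial.X k

/-- `h_k` for integer index, vanishing for `k < 0`. -/
def hz (k : ℤ) : SymAlg := if k < 0 then 0 else hh k.toNat

/-- The Schur function `s_λ`, via the Jacobi–Trudi determinant
`s_λ = det(h_{λ_i − i + j})_{1 ≤ i,j ≤ l(λ)}`. -/
def schur (f : ℕ → ℕ) : SymAlg :=
  Matrix.det (Matrix.of fun i j : Fin (plength f) =>
    hz ((f i : ℤ) - (i : ℤ) + (j : ℤ)))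

/-! ### The graded completion of `Λ_ℚ`, as multivariate formal power series in the `p`'s -/

abbrev SymSeries : Type := MvPowerSeries ℕ ℚ

def coeffS (m : ℕ →₀ ℕ) (g : SymSeries) : ℚ := MvPowerSeries.coeff m g

/-- `f^⊥` acting on a formal series, coefficientwise. -/
def perpS (f : SymAlg) (g : SymSeries) : SymSeries := fun m'' =>
  ∑ m ∈ f.support,
    MvPolynomial.coeff m f * coeffS (m'' + m) g *
      m.prod fun k a => ((k + 1 : ℚ)) ^ a * (((m'' + m) k).descFactorial a : ℚ)

/-- `B_n = Σ_{m ≥ 0, n+m ≥ 0} (−1)^m h_{n+m} e_m^⊥` acting on the completion, defined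
coefficientwise (the term `m` contributes to the coefficient of a monomial `m''` only
when `n + m ≤ wtm m''`, which justifies the truncation). -/
def BS (n : ℤ) (g : SymSeries) : SymSeries := fun m'' =>
  ∑ m ∈ Finset.range (wtm m'' + (-n).toNat + 1),
    if 0 ≤ n + (m : ℤ) then
      ((-1 : ℚ) ^ m) *
        coeffS m'' (((hh (n + (m : ℤ)).toNat : SymAlg) : SymSeries) * perpS (ee m) g)
    else 0

/-- `B_n^⊥ = Σ_{m ≥ 0, n+m ≥ 0} (−1)^m e_m h_{n+m}^⊥` acting on the completion. -/
def BpS (n : ℤ) (g : SymSeries) : SymSeries := fun m'' =>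
  ∑ m ∈ Finset.range (wtm m'' + 1),
    if 0 ≤ n + (m : ℤ) then
      ((-1 : ℚ) ^ m) *
        coeffS m'' (((ee m : SymAlg) : SymSeries) * perpS (hh (n + (m : ℤ)).toNat) g)
    else 0

/-- The formal sum `Σ_{λ ∈ 𝒫} a_λ s_λ` (each coefficient is a genuinely finite sum,
since only the finitely many partitions of `wtm m` contribute at a monomial `m`). -/
def schurSeries (a : (ℕ → ℕ) → ℚ) : SymSeries := fun m =>
  ∑ᶠ f : ℕ → ℕ, if IsPartition f then a f * MvPolynomial.coeff m (schur f) else 0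

/-! ### Two independent families of power sums `p`, `p̂`, for the KP bilinear identity.
Here `X (Sum.inl k) = p_{k+1}` and `X (Sum.inr k) = p̂_{k+1}`. -/

abbrev BiSeries : Type := MvPowerSeries (ℕ ⊕ ℕ) ℚ

def coeffB (m : (ℕ ⊕ ℕ) →₀ ℕ) (g : BiSeries) : ℚ := MvPowerSeries.coeff m g

/-- `τ(p)`: a series in the `p`'s viewed inside the two-variable-family algebra. -/
def liftL (g : SymSeries) : BiSeries := fun m =>
  if ∀ v ∈ m.support, Sum.isLeft v = true then
    coeffS (Finsupp.comapDomain Sum.inl m Sum.inl_injective.injOn) g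
  else 0

/-- `τ(p̂)`: a series in the `p̂`'s viewed inside the two-variable-family algebra. -/
def liftR (g : SymSeries) : BiSeries := fun m =>
  if ∀ v ∈ m.support, Sum.isRight v = true then
    coeffS (Finsupp.comapDomain Sum.inr m Sum.inr_injective.injOn) g
  else 0

/-- Formal partial derivative `∂/∂X_v` on the two-family power series algebra. -/
def DV (v : ℕ ⊕ ℕ) (g : BiSeries) : BiSeries := fun m =>
  ((m v : ℚ) + 1) * coeffB (m + Finsupp.single v 1) g

/-- `∂/∂p_i − ∂/∂p̂_i` (for `i ≥ 1`). -/
def dd (i : ℕ) (g : BiSeries) : BiSeries :=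
  DV (Sum.inl (i - 1)) g - DV (Sum.inr (i - 1)) g

/-- Composition of the commuting operators `∂/∂p_i − ∂/∂p̂_i` over a list of indices. -/
def dProd (s : List ℕ) : BiSeries → BiSeries := s.foldr (fun i F => dd i ∘ F) id

/-- The coefficient of `y^n` in `exp(−Σ_{k≥1} y^k (∂/∂p_k − ∂/∂p̂_k))`, namely
`Σ_{λ ⊢ n} (−1)^{l(λ)} (∏_j f_j!)^{-1} ∏_i (∂/∂p_{λ_i} − ∂/∂p̂_{λ_i})`. -/
def DD (n : ℕ) (g : BiSeries) : BiSeries :=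
  ∑ P : Nat.Partition n,
    (((-1 : ℚ) ^ (Multiset.card P.parts)) * ((autF P.parts : ℚ))⁻¹) •
      dProd (P.parts.sort (· ≤ ·)) g

/-- The coefficient of `t^n` in `exp(Σ_{k≥1} (t^k/k)(p_k − p̂_k))`, namely
`Σ_{λ ⊢ n} z_λ^{-1} ∏_i (p_{λ_i} − p̂_{λ_i})`. -/
def GG (n : ℕ) : MvPolynomial (ℕ ⊕ ℕ) ℚ :=
  ∑ P : Nat.Partition n,
    ((zee P.parts : ℚ)⁻¹) •
      (P.parts.map fun i =>
        (MvPolynomial.X (Sum.inl (i - 1)) - MvPolynomial.X (Sum.inr (i - 1)) :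
          MvPolynomial (ℕ ⊕ ℕ) ℚ)).prod

def wtB (m : (ℕ ⊕ ℕ) →₀ ℕ) : ℕ := m.sum fun v a => (Sum.elim (· + 1) (· + 1) v) * a

def wtL (m : (ℕ ⊕ ℕ) →₀ ℕ) : ℕ := m.sum fun v a => (Sum.elim (· + 1) (fun _ => 0) v) * a

def wtR (m : (ℕ ⊕ ℕ) →₀ ℕ) : ℕ := m.sum fun v a => (Sum.elim (fun _ => 0) (· + 1) v) * a

/-- The left-hand side
`[t^{-1}] exp(Σ_{k≥1} (t^k/k)(p_k − p̂_k)) exp(−Σ_{k≥1} t^{-k}(∂/∂p_k − ∂/∂p̂_k)) τ(p) τ(p̂)`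
of the KP bilinear equation, i.e. `Σ_{n≥0} G_n · D_{n+1} (τ(p)τ(p̂))`, defined
coefficientwise (only `n ≤ wtB m` contributes at a monomial `m`, since `G_n` is
homogeneous of weight `n`). -/
def KPLHS (tau : SymSeries) : BiSeries := fun m =>
  ∑ n ∈ Finset.range (wtB m + 1),
    coeffB m (((GG n : MvPolynomial (ℕ ⊕ ℕ) ℚ) : BiSeries) *
      DD (n + 1) (liftL tau * liftR tau))

/-- `τ` is a `τ`-function for the KP hierarchy: it satisfies the KP bilinear equation. -/
def IsTau (tau : SymSeries) : Prop := KPLHS tau = 0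

/-- `[t^{-1}] (B(t) τ(p)) · (B̂^⊥(t^{-1}) τ(p̂)) = Σ_{n ∈ ℤ} (B_n τ)(p) · (B̂^⊥_{n+1} τ)(p̂)`,
defined coefficientwise (at a monomial `m` only `−wtR m − 1 ≤ n ≤ wtL m` contributes,
which justifies the truncation; `n = j − wtR m − 1`). -/
def prodRHS (tau : SymSeries) : BiSeries := fun m =>
  ∑ j ∈ Finset.range (wtL m + wtR m + 2),
    coeffB m (liftL (BS ((j : ℤ) - (wtR m : ℤ) - 1) tau) *
      liftR (BpS ((j : ℤ) - (wtR m : ℤ)) tau))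

/-! ### The Plücker relations -/

/-- The condition on `ℓ` in the classical Plücker relations: `0 ≤ ℓ ≤ m − 1` and
`α_ℓ − 1 ≥ β_{k+1} − k + ℓ + 1 ≥ α_{ℓ+1}` (1-based, conventions `α_0 = ∞`, `α_m = −∞`)
and `β_{k+1} − k + ℓ + 1 ≥ 0`. -/
def PCond (m : ℕ) (α β : ℕ → ℕ) (k ℓ : ℕ) : Prop :=
  ℓ + 1 ≤ m ∧
  (ℓ = 0 ∨ ((β k : ℤ) - (k : ℤ) + ℓ + 1 ≤ (α (ℓ - 1) : ℤ) - 1)) ∧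
  (ℓ + 1 = m ∨ ((α ℓ : ℤ) ≤ (β k : ℤ) - (k : ℤ) + ℓ + 1)) ∧
  0 ≤ (β k : ℤ) - (k : ℤ) + ℓ + 1

/-- The term indexed by `k` in a classical Plücker relation:
`(−1)^{k−m+1+ℓ} a_{(α_1−1,…,α_ℓ−1, β_{k+1}−k+ℓ+1, α_{ℓ+1},…,α_{m−1})}
 · a_{(β_1+1,…,β_k+1, β_{k+2},…,β_{m+1})}`
for the unique admissible `ℓ` (identically `0` when no `ℓ` exists). -/
def cterm (a : (ℕ → ℕ) → ℚ) (m : ℕ) (α β : ℕ → ℕ) (k : ℕ) : ℚ :=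
  if h : ∃ ℓ : ℕ, PCond m α β k ℓ then
    ((-1 : ℚ) ^ ((k : ℤ) - (m : ℤ) + 1 + (h.choose : ℤ))) *
      a (fun t => if t < h.choose then α t - 1
          else if t = h.choose then ((β k : ℤ) - (k : ℤ) + h.choose + 1).toNat
          else α (t - 1)) *
      a (fun t => if t < k then β t + 1 else β (t + 1))
  else 0

/-- The classical Plücker relations for a family of scalars indexed by partitions. -/
def ClassicalPlucker (a : (ℕ → ℕ) → ℚ) : Prop :=
  ∀ m : ℕ, 1 ≤ m → ∀ α β : ℕ → ℕ, IsPartition α → IsPartition β →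
    plength α ≤ m - 1 → plength β ≤ m + 1 →
      ∑ k ∈ Finset.range (m + 1), cterm a m α β k = 0

/-- The symmetrical form of the Plücker relations:
for all partitions `α`, `β`,
`Σ_{i,j ≥ 1, |α^{(i)}|+|β^{(−j)}| = |α|+|β|+1} (−1)^{|α|−|α^{(i)}|+i+j} a_{α^{(i)}} a_{β^{(−j)}} = 0`. -/
def SymPlucker (a : (ℕ → ℕ) → ℚ) : Prop :=
  ∀ α β : ℕ → ℕ, IsPartition α → IsPartition β →
    (∑ᶠ (i : ℕ), ∑ᶠ (j : ℕ),
      if 1 ≤ i ∧ 1 ≤ j ∧ psize (swR α i) + psize (swU β j) = psize α + psize β + 1 then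
        ((-1 : ℚ) ^ ((psize α : ℤ) - (psize (swR α i) : ℤ) + (i : ℤ) + (j : ℤ))) *
          a (swR α i) * a (swU β j)
      else 0) = 0

end
end Paper

namespace Paper

private lemma nat_eq_of_lt_iff (A B : ℕ) (h : ∀ k, k < A ↔ k < B) : A = B := by
  have h1 := h A; have h2 := h B; omega

lemma lt_numParts_iff {f : ℕ → ℕ} (hf : IsPartition f) {j : ℕ} (hj : 1 ≤ j) (k : ℕ) :
    k < numParts f j ↔ j ≤ f k := by
  obtain ⟨hmono, N, hN⟩ := hf
  have hTne : {k | f k < j}.Nonempty := ⟨N, by simp only [Set.mem_setOf_eq, hN N le_rfl]; omega⟩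
  set m := sInf {k | f k < j} with hm
  have hmmem : f m < j := Nat.sInf_mem hTne
  have hset : {k | j ≤ f k} = Set.Iio m := by
    ext k
    simp only [Set.mem_setOf_eq, Set.mem_Iio]
    constructor
    · intro hk
      by_contra h
      have := hmono (show m ≤ k by omega)
      omega
    · intro hk
      have := Nat.notMem_of_lt_sInf (hm ▸ hk)
      simp only [Set.mem_setOf_eq] at this
      omega
  have hnum : numParts f j = m := by
    rw [numParts, hset, Nat.card_eq_card_toFinset, Set.toFinset_Iio, Nat.card_Iio m]
  rw [hnum]
  have h := Set.ext_iff.1 hset k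
  simp only [Set.mem_setOf_eq, Set.mem_Iio] at h
  exact h.symm

lemma numParts_eq {f : ℕ → ℕ} (hf : IsPartition f) {j : ℕ} (hj : 1 ≤ j) (V : ℕ)
    (h : ∀ k, (k < V ↔ j ≤ f k)) : numParts f j = V :=
  nat_eq_of_lt_iff _ _ fun k => (lt_numParts_iff hf hj k).trans (h k).symm

lemma conj_isPartition {f : ℕ → ℕ} (hf : IsPartition f) : IsPartition (conj f) := by
  constructor
  · intro c d hcd
    by_contra h
    push_neg at h
    unfold conj at h
    have h1 : d + 1 ≤ f (numParts f (c+1)) :=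
      (lt_numParts_iff hf (show 1 ≤ d + 1 by omega) _).1 h
    have h2 : numParts f (c+1) < numParts f (c+1) :=
      (lt_numParts_iff hf (show 1 ≤ c + 1 by omega) _).2 (by omega)
    omega
  · refine ⟨f 0, fun c hc => ?_⟩
    by_contra h
    have h1 := (lt_numParts_iff hf (show 1 ≤ c + 1 by omega) 0).1 (by unfold conj at h; omega)
    omega

lemma swU_isPartition {f : ℕ → ℕ} (hf : IsPartition f) {i : ℕ} (hi : 1 ≤ i) :
    IsPartition (swU f i) := by
  obtain ⟨hmono, N, hN⟩ := hf
  constructor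
  · intro k l hkl
    unfold swU
    by_cases h1 : k + 1 < i <;> by_cases h2 : l + 1 < i <;> simp only [h1, h2, if_pos, if_neg,
      if_true, if_false]
    · have := hmono hkl; omega
    · have := hmono (show k ≤ l + 1 by omega); omega
    · omega
    · exact hmono (by omega)
  · exact ⟨N + i, fun k hk => by
      unfold swU
      rw [if_neg (by omega)]
      exact hN _ (by omega)⟩

end Paper

/-- For every partition `λ` and every `i ≥ 1`, `(λ')^{(i)} = (λ^{(−i)})'`. -/
theorem Paper.conj_swR_swU (f : ℕ → ℕ) (hf : Paper.IsPartition f) (i : ℕ) (hi : 1 ≤ i) :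
    Paper.swR (Paper.conj f) i = Paper.conj (Paper.swU f i) := by
  have hmono := hf.1
  have hc : IsPartition (conj f) := conj_isPartition hf
  have hs : IsPartition (swU f i) := swU_isPartition hf hi
  have charC : ∀ c k : ℕ, k < conj f c ↔ c + 1 ≤ f k := fun c k =>
    lt_numParts_iff hf (by omega) k
  have hu : numParts (conj f) i = f (i - 1) := by
    apply nat_eq_of_lt_iff
    intro k
    rw [lt_numParts_iff hc hi k]
    have h1 := charC k (i - 1)
    constructor
    · intro hk
      have : i - 1 < conj f k := h1.2 (by omega)
      omega
    · intro hk
      have := h1.1 (by omega)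
      omega
  funext c
  show (if c < numParts (conj f) i then conj f c - 1
    else if c = numParts (conj f) i then i - 1 else conj f (c - 1)) = conj (swU f i) c
  rw [hu]
  have hSU : ∀ k : ℕ, swU f i k = if k + 1 < i then f k + 1 else f (k + 1) := fun k => rfl
  by_cases h1 : c < f (i - 1)
  · rw [if_pos h1]
    have hge : i ≤ conj f c := by
      have := (charC c (i - 1)).2 (by omega)
      omega
    refine (numParts_eq hs (by omega) _ fun k => ?_).symm
    rw [hSU k]
    by_cases h2 : k + 1 < i
    · rw [if_pos h2]
      have hk1 : f (i - 1) ≤ f k := hmono (by omega)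
      constructor
      · intro _; omega
      · intro _; omega
    · rw [if_neg h2]
      have := charC c (k + 1)
      omega
  · by_cases h0 : c = f (i - 1)
    · rw [if_neg h1, if_pos h0]
      refine (numParts_eq hs (by omega) _ fun k => ?_).symm
      rw [hSU k]
      by_cases h2 : k + 1 < i
      · rw [if_pos h2]
        have hk1 : f (i - 1) ≤ f k := hmono (by omega)
        omega
      · rw [if_neg h2]
        have hk1 : f (k + 1) ≤ f (i - 1) := hmono (by omega)
        omega
    · rw [if_neg h1, if_neg h0]
      have hcpos : 1 ≤ c := by omega
      refine (numParts_eq hs (by omega) _ fun k => ?_).symm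
      have hch : ∀ k' : ℕ, k' < conj f (c - 1) ↔ c ≤ f k' := by
        intro k'
        have := charC (c - 1) k'
        omega
      rw [hSU k]
      by_cases h2 : k + 1 < i
      · rw [if_pos h2]
        have := hch k
        omega
      · rw [if_neg h2]
        have hk1 : f (k + 1) ≤ f (i - 1) := hmono (by omega)
        have hk2 : f k ≤ f (i - 1) := hmono (by omega)
        have := hch k
        omega
end

section
/- Let λ and μ be partitions. If μ has a λ-ambiguous square — that is, a square contained in the diagrams of both λ and μ that is rightmost in its row of the diagram of λ and bottommost in its column of the diagram of μ — then R_{λ,μ} = 0. -/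
open scoped BigOperators
open scoped Classical

namespace Paper

section AmbiguousAux

private lemma psize_eq_sum {f : ℕ → ℕ} {N : ℕ} (h : ∀ k, N ≤ k → f k = 0) :
    psize f = ∑ k ∈ Finset.range N, f k := by
  apply finsum_eq_finset_sum_of_support_subset
  intro x hx
  simp only [Function.mem_support] at hx
  simp only [Finset.coe_range, Set.mem_Iio]
  by_contra hc
  exact hx (h x (le_of_not_gt hc))

private lemma sigma_mem {l m : ℕ → ℕ} {r c : ℕ} (hamb : Ambiguous l m r c)
    {ν : ℕ → ℕ} (hν : ν ∈ RSet l m) :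
    (fun k => if k = r then 2 * c + 1 - ν r else ν k) ∈ RSet l m := by
  obtain ⟨hlr, hm1, hm2⟩ := hamb
  obtain ⟨⟨hmono, N, hN⟩, hv, hhs⟩ := hν
  have h1 : c ≤ ν r := by have := (hv r).2; omega
  have h2 : ν r ≤ c + 1 := by have := (hv r).1; omega
  have hlt : ∀ i, i < r → c + 1 ≤ ν i := by
    intro i hi
    have hr1 : 1 ≤ r := by omega
    have := hmono (show i ≤ r - 1 by omega)
    have := (hhs (r - 1)).1
    have : m (r - 1 + 1) ≤ ν (r - 1) := this
    rw [show r - 1 + 1 = r by omega] at this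
    omega
  have hgt : ∀ j, r < j → ν j ≤ c := by
    intro j hj
    have := hmono (show r + 1 ≤ j by omega)
    have := (hhs (r + 1)).2
    omega
  refine ⟨⟨?_, ⟨max N (r + 1), ?_⟩⟩, ?_, ?_⟩
  · intro i j hij
    dsimp only
    by_cases hi : i = r
    · by_cases hj : j = r
      · rw [hi, hj]
      · rw [if_pos hi, if_neg hj]
        have := hgt j (by omega)
        omega
    · by_cases hj : j = r
      · rw [if_neg hi, if_pos hj]
        have := hlt i (by omega)
        omega
      · rw [if_neg hi, if_neg hj]
        exact hmono hij
  · intro k hk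
    dsimp only
    rw [if_neg (show k ≠ r by omega)]
    exact hN k (by omega)
  · intro k
    dsimp only
    by_cases hk : k = r
    · subst hk
      rw [if_pos rfl]
      omega
    · rw [if_neg hk]
      exact hv k
  · intro k
    dsimp only
    by_cases hk : k = r
    · subst hk
      rw [if_pos rfl]
      omega
    · rw [if_neg hk]
      exact hhs k

/-- auxiliary form. -/
private lemma Rnum_eq_zero_of_ambiguous_aux (l m : ℕ → ℕ)
    (hl : IsPartition l) (hm : IsPartition m)
    (h : ∃ r c, Ambiguous l m r c) :
    Rnum l m = 0 := by
  classical
  obtain ⟨r, c, hamb⟩ := h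
  set S := RSet l m with hS
  set g : (ℕ → ℕ) → ℤ := fun ν => (-1 : ℤ) ^ (psize l - psize ν) with hg
  set σ : (ℕ → ℕ) → (ℕ → ℕ) :=
    fun ν k => if k = r then 2 * c + 1 - ν r else ν k with hσ
  obtain ⟨hlr, hm1, hm2⟩ := hamb
  obtain ⟨hlmono, Nl, hNl⟩ := hl
  -- basic bounds for members of S
  have hbd : ∀ ν ∈ S, c ≤ ν r ∧ ν r ≤ c + 1 := by
    intro ν hν
    obtain ⟨_, hv, _⟩ := hν
    have := (hv r).1; have := (hv r).2
    omega
  have hinv : ∀ ν ∈ S, σ (σ ν) = ν := by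
    intro ν hν
    obtain ⟨hb1, hb2⟩ := hbd ν hν
    funext k
    by_cases hk : k = r
    · subst hk
      simp only [hσ, if_pos rfl, eq_self_iff_true, if_true]
      omega
    · simp only [hσ, if_neg hk]
  -- sign flip
  have key : ∀ ν ∈ S, g ν = -(g (σ ν)) := by
    intro ν hν
    obtain ⟨hb1, hb2⟩ := hbd ν hν
    obtain ⟨⟨hνmono, Nν, hNν⟩, hv, hhs⟩ := hν
    set M := max (max Nl Nν) (r + 1) with hM
    have hlM : ∀ k, M ≤ k → l k = 0 := fun k hk => hNl k (by omega)
    have hνM : ∀ k, M ≤ k → ν k = 0 := fun k hk => hNν k (by omega)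
    have hσM : ∀ k, M ≤ k → σ ν k = 0 := by
      intro k hk
      simp only [hσ, if_neg (show k ≠ r by omega)]
      exact hνM k hk
    have hrM : r ∈ Finset.range M := Finset.mem_range.2 (by omega)
    have e1 : ∑ k ∈ (Finset.range M).erase r, σ ν k
        = ∑ k ∈ (Finset.range M).erase r, ν k := by
      refine Finset.sum_congr rfl fun k hk => ?_
      simp only [hσ, if_neg (Finset.ne_of_mem_erase hk)]
    have e2 : psize (σ ν) + ν r = psize ν + σ ν r := by
      rw [psize_eq_sum hσM, psize_eq_sum hνM,
        ← Finset.sum_erase_add _ _ hrM, ← Finset.sum_erase_add _ ν hrM, e1]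
      ring
    have hσr : σ ν r = 2 * c + 1 - ν r := by simp [hσ]
    have hle : psize ν ≤ psize l := by
      rw [psize_eq_sum hνM, psize_eq_sum hlM]
      exact Finset.sum_le_sum fun k _ => (hv k).1
    have hle' : psize (σ ν) ≤ psize l := by
      rw [psize_eq_sum hσM, psize_eq_sum hlM]
      refine Finset.sum_le_sum fun k _ => ?_
      by_cases hk : k = r
      · subst hk; simp only [hσ, if_pos rfl]; omega
      · simp only [hσ, if_neg hk]; exact (hv k).1
    rcases (show ν r = c ∨ ν r = c + 1 by omega) with hc | hc
    · have hsz : psize (σ ν) = psize ν + 1 := by omega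
      have : psize l - psize ν = (psize l - psize (σ ν)) + 1 := by omega
      rw [hg]
      simp only [this, pow_succ]
      ring
    · have hsz : psize ν = psize (σ ν) + 1 := by omega
      have : psize l - psize (σ ν) = (psize l - psize ν) + 1 := by omega
      rw [hg]
      simp only [this, pow_succ]
      ring
  have hbij : Set.BijOn σ S S := by
    refine ⟨fun ν hν => sigma_mem ⟨hlr, hm1, hm2⟩ hν, ?_, ?_⟩
    · intro a ha b hb hab
      rw [← hinv a ha, ← hinv b hb, hab]
    · intro ν hν
      exact ⟨σ ν, sigma_mem ⟨hlr, hm1, hm2⟩ hν, hinv ν hν⟩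
  have h1 : (∑ᶠ ν ∈ S, g ν) = ∑ᶠ ν ∈ S, -(g ν) :=
    finsum_mem_eq_of_bijOn σ hbij key
  have h2 : (∑ᶠ ν ∈ S, -(g ν)) = -∑ᶠ ν ∈ S, g ν := by
    rw [finsum_mem_def, finsum_mem_def, ← finsum_neg_distrib]
    congr 1
    funext x
    by_cases hx : x ∈ S <;> simp [Set.indicator_apply, hx]
  have : Rnum l m = ∑ᶠ ν ∈ S, g ν := rfl
  rw [this]
  have := h1.trans h2
  omega

end AmbiguousAux

end Paper

/-- If `μ` has a `λ`-ambiguous square, then `R_{λ,μ} = 0`. -/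
theorem Paper.Rnum_eq_zero_of_ambiguous (l m : ℕ → ℕ)
    (hl : Paper.IsPartition l) (hm : Paper.IsPartition m)
    (h : ∃ r c, Paper.Ambiguous l m r c) :
    Paper.Rnum l m = 0 :=
  Paper.Rnum_eq_zero_of_ambiguous_aux l m hl hm h
end

section
/- Let μ be a λ-survivor. Then: (a) if the rightmost square of row i of λ is not contained in μ (equivalently μ_i < λ_i), then the rightmost square of row i−1 of λ is not contained in μ (equivalently μ_{i−1} < λ_{i−1}); and (b) if the bottommost square of column i of μ is not contained in λ (equivalently λ'_i < μ'_i), then the bottommost square of column i−1 of μ is not contained in λ (equivalently λ'_{i−1} < μ'_{i−1}). -/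
open scoped BigOperators
open scoped Classical

private lemma Paper.numParts_finite {f : ℕ → ℕ} (hf : Paper.IsPartition f) {i : ℕ}
    (hi : 1 ≤ i) : {k | i ≤ f k}.Finite := by
  obtain ⟨N, hN⟩ := hf.2
  apply (Set.finite_Iio N).subset
  intro k hk
  simp only [Set.mem_setOf_eq] at hk
  by_contra h
  simp only [Set.mem_Iio, not_lt] at h
  have : f k = 0 := hN k h
  omega

private lemma Paper.lt_numParts_iff_s6 {f : ℕ → ℕ} (hf : Paper.IsPartition f) {i r : ℕ}
    (hi : 1 ≤ i) : r < Paper.numParts f i ↔ i ≤ f r := by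
  have hfin := Paper.numParts_finite hf hi
  have hcard : Paper.numParts f i = {k | i ≤ f k}.ncard := Nat.card_coe_set_eq _
  constructor
  · intro h
    by_contra hr
    push_neg at hr
    have hsub : {k | i ≤ f k} ⊆ Set.Iio r := by
      intro k hk
      simp only [Set.mem_setOf_eq] at hk
      by_contra hk'
      simp only [Set.mem_Iio, not_lt] at hk'
      exact absurd (le_trans hk (hf.1 hk')) (not_le.mpr hr)
    have h2 := Set.ncard_le_ncard hsub (Set.finite_Iio r)
    rw [← Finset.coe_Iio, Set.ncard_coe_finset, Nat.card_Iio] at h2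
    omega
  · intro h
    have hsub : Set.Iic r ⊆ {k | i ≤ f k} := by
      intro k hk
      simp only [Set.mem_Iic] at hk
      exact le_trans h (hf.1 hk)
    have h2 := Set.ncard_le_ncard hsub hfin
    rw [← Finset.coe_Iic, Set.ncard_coe_finset, Nat.card_Iic] at h2
    omega

/-- In a `λ`-survivor `μ`:
(a) if `μ_i < λ_i` then `μ_{i−1} < λ_{i−1}` (rows, 1-based `i ≥ 2`; here 0-based);
(b) if `λ'_i < μ'_i` then `λ'_{i−1} < μ'_{i−1}` (columns). -/
theorem Paper.survivor_props (l m : ℕ → ℕ)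
    (hl : Paper.IsPartition l) (hm : Paper.IsPartition m)
    (hs : Paper.Survivor l m) :
    (∀ k : ℕ, m (k + 1) < l (k + 1) → m k < l k) ∧
    (∀ k : ℕ, Paper.conj l (k + 1) < Paper.conj m (k + 1) →
      Paper.conj l k < Paper.conj m k) := by
  constructor
  · -- part (a)
    intro k h
    by_contra hc
    push_neg at hc
    have hlk1 : l (k + 1) ≤ l k := hl.1 (by omega)
    have h1 : 1 ≤ l k := by omega
    apply hs.2 k (l k - 1)
    refine ⟨by omega, by omega, by omega⟩
  · -- part (b)
    intro k h
    by_contra hc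
    push_neg at hc
    unfold Paper.conj at h hc
    have h' : Paper.numParts l (k + 2) < Paper.numParts m (k + 2) := h
    clear h
    set A := Paper.numParts m (k + 2) with hA
    set B := Paper.numParts m (k + 1) with hB
    have hA1 : 1 ≤ A := by omega
    have hAB : A ≤ B := by
      have h1 : k + 2 ≤ m (A - 1) := (Paper.lt_numParts_iff_s6 hm (by omega)).1 (by omega)
      have h2 : A - 1 < B := (Paper.lt_numParts_iff_s6 hm (by omega)).2 (by omega)
      omega
    have hB1 : 1 ≤ B := by omega
    have hmB1 : k + 1 ≤ m (B - 1) := (Paper.lt_numParts_iff_s6 hm (by omega)).1 (by omega)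
    have hmB : ¬ (k + 1 ≤ m B) := fun hx =>
      absurd ((Paper.lt_numParts_iff_s6 hm (by omega)).2 hx) (by omega)
    have hlB1 : k + 1 ≤ l (B - 1) := (Paper.lt_numParts_iff_s6 hl (by omega)).1 (by omega)
    have hlB2 : ¬ (k + 2 ≤ l (B - 1)) := fun hx =>
      absurd ((Paper.lt_numParts_iff_s6 hl (by omega)).2 hx) (by omega)
    apply hs.2 (B - 1) k
    have hBe : B - 1 + 1 = B := by omega
    refine ⟨by omega, ?_, by omega⟩
    rw [hBe]
    omega
end

section
/- For all partitions λ and μ: if μ = λ^{(i)} for some i ≥ 1 then R_{λ,μ} = (−1)^{u_i(λ)}, and if μ is not of the form λ^{(i)} for any i ≥ 1 then R_{λ,μ} = 0. In particular, the λ-survivors are exactly the partitions λ^{(i)} for i ≥ 1, and for each λ-survivor μ the set R_{λ,μ} contains exactly one partition ν. -/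
open scoped BigOperators
open scoped Classical

namespace Paper

/-- Per-position characterization of membership in `RSet`. -/
private lemma mem_RSet_iff {l m : ℕ → ℕ} (hl : IsPartition l) (nu : ℕ → ℕ) :
    nu ∈ RSet l m ↔
      ∀ k, (nu k ≤ l k ∧ l k ≤ nu k + 1) ∧ (m (k + 1) ≤ nu k ∧ nu k ≤ m k) := by
  constructor
  · rintro ⟨_, hv, hh⟩ k
    exact ⟨hv k, hh k⟩
  · intro h
    refine ⟨⟨fun a b hab => ?_, ?_⟩, fun k => (h k).1, fun k => (h k).2⟩
    · exact antitone_nat_of_succ_le (fun k => le_trans (h (k+1)).2.2 (h k).2.1) hab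
    · obtain ⟨N, hN⟩ := hl.2
      exact ⟨N, fun k hk => Nat.le_antisymm (by rw [← hN k hk]; exact (h k).1.1) (Nat.zero_le _)⟩

/-- A finite downward closed subset of `ℕ` is an initial segment. -/
private lemma lower_mem_iff {S : Set ℕ} (hfin : S.Finite)
    (hdc : ∀ {a b : ℕ}, a ≤ b → b ∈ S → a ∈ S) (k : ℕ) :
    k ∈ S ↔ k < Nat.card S := by
  classical
  have hcard : Nat.card S = hfin.toFinset.card := by
    rw [Nat.card_coe_set_eq, Set.ncard_eq_toFinset_card _ hfin]
  rw [hcard]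
  constructor
  · intro hk
    have hsub : Finset.range (k + 1) ⊆ hfin.toFinset := by
      intro a ha
      rw [Finset.mem_range] at ha
      rw [Set.Finite.mem_toFinset]
      exact hdc (Nat.lt_succ_iff.mp ha) hk
    calc k < k + 1 := Nat.lt_succ_self k
    _ = (Finset.range (k + 1)).card := (Finset.card_range _).symm
    _ ≤ hfin.toFinset.card := Finset.card_le_card hsub
  · intro hk
    by_contra hkS
    have hsub : hfin.toFinset ⊆ Finset.range k := by
      intro b hb
      rw [Set.Finite.mem_toFinset] at hb
      rw [Finset.mem_range]
      by_contra hbk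
      exact hkS (hdc (Nat.le_of_not_lt hbk) hb)
    have := Finset.card_le_card hsub
    rw [Finset.card_range] at this
    omega

private lemma numParts_iff {l : ℕ → ℕ} (hl : IsPartition l) {i : ℕ} (hi : 1 ≤ i) (k : ℕ) :
    k < numParts l i ↔ i ≤ l k := by
  obtain ⟨N, hN⟩ := hl.2
  have hfin : {k | i ≤ l k}.Finite := by
    apply Set.Finite.subset (Set.finite_Iio N)
    intro a ha
    simp only [Set.mem_setOf_eq] at ha
    simp only [Set.mem_Iio]
    by_contra h
    have := hN a (Nat.le_of_not_lt h)
    omega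
  exact ((lower_mem_iff hfin (fun hab hb => le_trans hb (hl.1 hab)) k)).symm

private lemma RSet_finite {l m : ℕ → ℕ} (hl : IsPartition l) : (RSet l m).Finite := by
  obtain ⟨N, hN⟩ := hl.2
  have hle : ∀ nu ∈ RSet l m, ∀ k, nu k ≤ l k := fun nu h k => (h.2.1 k).1
  set e : (ℕ → ℕ) → (Fin N → Fin (l 0 + 1)) := fun nu k =>
    ⟨min (nu k) (l 0), Nat.lt_succ_of_le (min_le_right _ _)⟩ with he
  apply Set.Finite.of_finite_image (f := e) (Set.toFinite _)
  intro nu hnu nu' hnu' hee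
  funext k
  by_cases hk : k < N
  · have h1 : min (nu k) (l 0) = nu k := min_eq_left (le_trans (hle nu hnu k) (hl.1 (Nat.zero_le k)))
    have h2 : min (nu' k) (l 0) = nu' k :=
      min_eq_left (le_trans (hle nu' hnu' k) (hl.1 (Nat.zero_le k)))
    have := congrFun hee ⟨k, hk⟩
    simp only [he, Fin.mk.injEq] at this
    rw [← h1, ← h2]
    exact this
  · have h0 := hN k (Nat.le_of_not_lt hk)
    have h1 := hle nu hnu k
    have h2 := hle nu' hnu' k
    omega

end Paper

namespace Paper

private lemma swR_main {l m : ℕ → ℕ} (hl : IsPartition l) {i : ℕ} (hi : 1 ≤ i)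
    (hmi : m = swR l i) :
    RSet l m = {fun k => if k < numParts l i then l k - 1 else l k} ∧
    (∀ r c, ¬ Ambiguous l m r c) ∧
    Rnum l m = (-1 : ℤ) ^ (numParts l i) := by
  classical
  set j := numParts l i with hjdef
  have hj : ∀ k, k < j ↔ i ≤ l k := numParts_iff hl hi
  set nu0 : ℕ → ℕ := fun k => if k < j then l k - 1 else l k with hnu0
  have hm1 : ∀ k, k < j → m k = l k - 1 := by
    intro k hk
    rw [hmi]
    simp only [swR]
    rw [if_pos (by omega)]
  have hm2 : m j = i - 1 := by
    rw [hmi]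
    simp only [swR]
    rw [if_neg (by omega)]
    simp [hjdef]
  have hm3 : ∀ k, j < k → m k = l (k - 1) := by
    intro k hk
    rw [hmi]
    simp only [swR]
    rw [if_neg (by omega), if_neg (by omega)]
  have hm4 : ∀ k, j ≤ k → m (k + 1) = l k := by
    intro k hk
    have := hm3 (k + 1) (by omega)
    simpa using this
  have hcon : ∀ k, (nu0 k ≤ l k ∧ l k ≤ nu0 k + 1) ∧ (m (k + 1) ≤ nu0 k ∧ nu0 k ≤ m k) := by
    intro k
    rcases lt_trichotomy k j with hk | hk | hk
    · have hik : i ≤ l k := (hj k).1 hk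
      have hval : nu0 k = l k - 1 := by simp only [hnu0]; rw [if_pos hk]
      have hmk := hm1 k hk
      have hm' : m (k + 1) ≤ l k - 1 := by
        rcases lt_trichotomy (k + 1) j with h1 | h1 | h1
        · have h2 := hm1 (k + 1) h1
          have h3 : l (k + 1) ≤ l k := hl.1 (Nat.le_succ k)
          omega
        · have h2 : m (k + 1) = i - 1 := by rw [h1]; exact hm2
          omega
        · omega
      exact ⟨⟨by omega, by omega⟩, by omega, by omega⟩
    · have hval : nu0 k = l k := by simp only [hnu0]; rw [if_neg (by omega)]
      have hlk : l k < i := by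
        by_contra h
        have := (hj k).2 (Nat.le_of_not_lt h)
        omega
      have h4 : m (k + 1) = l k := hm4 k (by omega)
      have h5 : m k = i - 1 := by rw [hk]; exact hm2
      exact ⟨⟨by omega, by omega⟩, by omega, by omega⟩
    · have hval : nu0 k = l k := by simp only [hnu0]; rw [if_neg (by omega)]
      have h4 : m (k + 1) = l k := hm4 k (by omega)
      have h5 : m k = l (k - 1) := hm3 k hk
      have h6 : l k ≤ l (k - 1) := hl.1 (by omega)
      exact ⟨⟨by omega, by omega⟩, by omega, by omega⟩
  have hset : RSet l m = {nu0} := by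
    ext nu
    rw [mem_RSet_iff hl, Set.mem_singleton_iff]
    constructor
    · intro h
      funext k
      obtain ⟨⟨h1, h2⟩, h3, h4⟩ := h k
      by_cases hk : k < j
      · have hik : i ≤ l k := (hj k).1 hk
        have hmk := hm1 k hk
        have hval : nu0 k = l k - 1 := by simp only [hnu0]; rw [if_pos hk]
        omega
      · have h4' : m (k + 1) = l k := hm4 k (Nat.le_of_not_lt hk)
        have hval : nu0 k = l k := by simp only [hnu0]; rw [if_neg hk]
        omega
    · intro h; subst h; exact hcon
  have hamb : ∀ r c, ¬ Ambiguous l m r c := by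
    rintro r c ⟨h1, h2, h3⟩
    by_cases hr : r < j
    · have := hm1 r hr
      omega
    · have := hm4 r (Nat.le_of_not_lt hr)
      omega
  refine ⟨hset, hamb, ?_⟩
  obtain ⟨N, hN⟩ := hl.2
  have hjN : j ≤ N := by
    by_contra h
    have h1 : i ≤ l N := (hj N).1 (by omega)
    have := hN N le_rfl
    omega
  have hnu0N : ∀ k, N ≤ k → nu0 k = 0 := by
    intro k hk
    have := hN k hk
    simp only [hnu0]
    split <;> omega
  have hpl : psize l = ∑ k ∈ Finset.range N, l k := psize_eq_sum hN
  have hpn : psize nu0 = ∑ k ∈ Finset.range N, nu0 k := psize_eq_sum hnu0N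
  have hsum : psize l = psize nu0 + j := by
    rw [hpl, hpn]
    have hterm : ∀ k ∈ Finset.range N, l k = nu0 k + (if k < j then 1 else 0) := by
      intro k _
      simp only [hnu0]
      by_cases hk : k < j
      · have : i ≤ l k := (hj k).1 hk
        rw [if_pos hk, if_pos hk]
        omega
      · rw [if_neg hk, if_neg hk]
        omega
    rw [Finset.sum_congr rfl hterm, Finset.sum_add_distrib]
    congr 1
    rw [← Finset.sum_subset (Finset.range_subset_range.2 hjN)
      (by intro x _ hx; rw [Finset.mem_range] at hx; rw [if_neg hx])]
    rw [Finset.sum_congr rfl (fun x hx => if_pos (Finset.mem_range.1 hx))]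
    simp
  have hkey : psize l - psize nu0 = j := by omega
  simp only [Rnum]
  rw [hset]
  simp only [finsum_mem_singleton]
  rw [hkey]

private lemma survivor_swR {l m : ℕ → ℕ} (hl : IsPartition l) (hm : IsPartition m)
    (hs : Survivor l m) : ∃ i, 1 ≤ i ∧ m = swR l i := by
  classical
  obtain ⟨⟨nu, hnu⟩, hamb⟩ := hs
  have hcon : ∀ k, m (k + 1) ≤ l k ∧ l k ≤ m k + 1 := by
    intro k
    obtain ⟨⟨h1, h2⟩, h3, h4⟩ := (mem_RSet_iff hl nu).1 hnu k
    exact ⟨le_trans h3 h1, by omega⟩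
  obtain ⟨N, hN⟩ := hl.2
  have hU : ∀ k, l k ≤ m k → m (k + 1) = l k := by
    intro k hk
    have hc := (hcon k).1
    by_cases h0 : l k = 0
    · omega
    · have hB : ¬ m (k + 1) ≤ l k - 1 := by
        intro hb
        refine hamb k (l k - 1) ?_
        exact ⟨by omega, hb, by omega⟩
      omega
  set S : Set ℕ := {k | m k < l k} with hS
  have hfin : S.Finite := by
    apply Set.Finite.subset (Set.finite_Iio N)
    intro a ha
    simp only [hS, Set.mem_setOf_eq] at ha
    simp only [Set.mem_Iio]
    by_contra h
    have := hN a (Nat.le_of_not_lt h)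
    omega
  have hstep : ∀ k, l k ≤ m k → l (k + 1) ≤ m (k + 1) := by
    intro k hk
    rw [hU k hk]
    exact hl.1 (Nat.le_succ k)
  have hdc : ∀ {a b : ℕ}, a ≤ b → b ∈ S → a ∈ S := by
    intro a b hab hb
    simp only [hS, Set.mem_setOf_eq] at hb ⊢
    by_contra h
    have hup : ∀ c, a ≤ c → l c ≤ m c := by
      intro c hc
      induction c, hc using Nat.le_induction with
      | base => omega
      | succ n hn ih => exact hstep n ih
    have := hup b hab
    omega
  set j := Nat.card S with hjdef
  have hj : ∀ k, m k < l k ↔ k < j := by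
    intro k
    have h := lower_mem_iff hfin hdc k
    simpa [hS, Set.mem_setOf_eq, hjdef] using h
  have hR : ∀ k, k < j → m k = l k - 1 ∧ 1 ≤ l k := by
    intro k hk
    have h1 := (hj k).2 hk
    have h2 := (hcon k).2
    omega
  have hU' : ∀ k, j ≤ k → m (k + 1) = l k := by
    intro k hk
    apply hU
    by_contra h
    have := (hj k).1 (by omega)
    omega
  have hlj : l j ≤ m j := by
    by_contra h
    have := (hj j).1 (by omega)
    omega
  refine ⟨m j + 1, by omega, ?_⟩
  have hiff := numParts_iff hl (i := m j + 1) (by omega)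
  have heq : ∀ k, k < numParts l (m j + 1) ↔ k < j := by
    intro k
    rw [hiff k]
    constructor
    · intro h
      by_contra hk
      have h1 : l k ≤ l j := hl.1 (Nat.le_of_not_lt hk)
      omega
    · intro h
      obtain ⟨he, h1⟩ := hR k h
      have h2 : m j ≤ m k := hm.1 (show k ≤ j by omega)
      omega
  have hnp : numParts l (m j + 1) = j := by
    have h1 : ¬ numParts l (m j + 1) < j := fun h =>
      absurd ((heq _).2 h) (lt_irrefl _)
    have h2 : ¬ j < numParts l (m j + 1) := fun h =>
      absurd ((heq _).1 h) (lt_irrefl _)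
    omega
  funext k
  simp only [swR]
  rw [hnp]
  rcases lt_trichotomy k j with hk | hk | hk
  · rw [if_pos hk]
    exact (hR k hk).1
  · rw [if_neg (by omega), if_pos hk, hk]
    omega
  · rw [if_neg (by omega), if_neg (by omega)]
    have h := hU' (k - 1) (by omega)
    rw [show k - 1 + 1 = k by omega] at h
    exact h

private lemma rnum_zero_amb {l m : ℕ → ℕ} (hl : IsPartition l) {r c : ℕ}
    (hamb : Ambiguous l m r c) : Rnum l m = 0 := by
  classical
  obtain ⟨h1, h2, h3⟩ := hamb
  obtain ⟨N, hN⟩ := hl.2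
  have hrN : r < N := by
    by_contra h
    have := hN r (Nat.le_of_not_lt h)
    omega
  have hfin : (RSet l m).Finite := RSet_finite hl
  have hle : ∀ nu ∈ RSet l m, ∀ k, nu k ≤ l k := by
    intro nu h k
    exact ((mem_RSet_iff hl nu).1 h k).1.1
  have hps : ∀ nu ∈ RSet l m, psize nu = ∑ k ∈ Finset.range N, nu k := by
    intro nu hnu
    apply psize_eq_sum
    intro k hk
    have ha := hle nu hnu k
    have hb := hN k hk
    omega
  have hplsize : psize l = ∑ k ∈ Finset.range N, l k := psize_eq_sum hN
  have hpsle : ∀ nu ∈ RSet l m, psize nu ≤ psize l := by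
    intro nu hnu
    rw [hps nu hnu, hplsize]
    exact Finset.sum_le_sum (fun k _ => hle nu hnu k)
  set T : (ℕ → ℕ) → (ℕ → ℕ) :=
    fun nu => Function.update nu r (if nu r = l r then c else l r) with hT
  have hmemT : ∀ nu ∈ RSet l m, T nu ∈ RSet l m := by
    intro nu hnu
    rw [mem_RSet_iff hl]
    intro k
    obtain ⟨⟨g1, g2⟩, g3, g4⟩ := (mem_RSet_iff hl nu).1 hnu k
    by_cases hk : k = r
    · subst hk
      simp only [hT, Function.update_self]
      split <;> omega
    · simp only [hT, Function.update_of_ne hk]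
      exact ⟨⟨g1, g2⟩, g3, g4⟩
  have hval : ∀ nu ∈ RSet l m, nu r = c ∨ nu r = l r := by
    intro nu hnu
    obtain ⟨⟨g1, g2⟩, g3, g4⟩ := (mem_RSet_iff hl nu).1 hnu r
    omega
  have hsumT : ∀ nu : ℕ → ℕ, ∑ k ∈ Finset.range N, T nu k =
      (if nu r = l r then c else l r) + ∑ k ∈ (Finset.range N).erase r, nu k := by
    intro nu
    rw [← Finset.add_sum_erase _ _ (Finset.mem_range.2 hrN)]
    congr 1
    · simp [hT]
    · apply Finset.sum_congr rfl
      intro k hk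
      have hkr : k ≠ r := (Finset.mem_erase.1 hk).1
      simp [hT, Function.update_of_ne hkr]
  have hsumnu : ∀ nu : ℕ → ℕ, ∑ k ∈ Finset.range N, nu k =
      nu r + ∑ k ∈ (Finset.range N).erase r, nu k := by
    intro nu
    rw [← Finset.add_sum_erase _ _ (Finset.mem_range.2 hrN)]
  simp only [Rnum]
  rw [← hfin.coe_toFinset, finsum_mem_coe_finset]
  apply Finset.sum_involution (g := fun nu _ => T nu)
  · intro nu hnu
    rw [Set.Finite.mem_toFinset] at hnu
    have hTnu := hmemT nu hnu
    have e1 := hps nu hnu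
    have e2 := hps (T nu) hTnu
    have e3 := hpsle nu hnu
    have e4 := hpsle (T nu) hTnu
    rw [hsumT nu] at e2
    rw [hsumnu nu] at e1
    rcases hval nu hnu with hv | hv
    · rw [if_neg (show ¬ nu r = l r by omega)] at e2
      have hstep : psize (T nu) = psize nu + 1 := by omega
      rw [hstep]
      have hd : psize l - psize nu = (psize l - (psize nu + 1)) + 1 := by omega
      rw [hd, pow_succ]
      ring
    · rw [if_pos hv] at e2
      have hstep : psize nu = psize (T nu) + 1 := by omega
      rw [hstep]
      have hd : psize l - psize (T nu) = (psize l - (psize (T nu) + 1)) + 1 := by omega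
      rw [hd, pow_succ]
      ring
  · intro nu hnu _
    rw [Set.Finite.mem_toFinset] at hnu
    intro hTeq
    have heq := congrFun hTeq r
    simp only [hT, Function.update_self] at heq
    rcases hval nu hnu with hv | hv
    · rw [if_neg (show ¬ nu r = l r by omega)] at heq
      omega
    · rw [if_pos hv] at heq
      omega
  · intro nu hnu
    rw [Set.Finite.mem_toFinset] at hnu ⊢
    exact hmemT nu hnu
  · intro nu hnu
    rw [Set.Finite.mem_toFinset] at hnu
    have hc : c ≠ l r := by omega
    rcases hval nu hnu with hv | hv
    · have hinner : T nu = Function.update nu r (l r) := by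
        simp only [hT]
        rw [if_neg (show ¬ nu r = l r by omega)]
      show T (T nu) = nu
      rw [hinner]
      have hred : T (Function.update nu r (l r)) = Function.update nu r c := by
        simp [hT, Function.update_idem]
      rw [hred, ← hv, Function.update_eq_self]
    · have hinner : T nu = Function.update nu r c := by
        simp only [hT]
        rw [if_pos hv]
      show T (T nu) = nu
      rw [hinner]
      have hred : T (Function.update nu r c) = Function.update nu r (l r) := by
        simp [hT, Function.update_idem, hc]
      rw [hred, ← hv, Function.update_eq_self]

end Paper

/-- If `μ = λ^{(i)}` for some `i ≥ 1` then `R_{λ,μ} = (−1)^{u_i(λ)}`;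
if `μ` is not of this form then `R_{λ,μ} = 0`. In particular the `λ`-survivors are exactly
the `λ^{(i)}`, `i ≥ 1`, and for each `λ`-survivor `μ` the set `𝓡_{λ,μ}` has exactly one
element. -/
theorem Paper.Rnum_characterization (l m : ℕ → ℕ)
    (hl : Paper.IsPartition l) (hm : Paper.IsPartition m) :
    (∀ i : ℕ, 1 ≤ i → m = Paper.swR l i →
      Paper.Rnum l m = (-1 : ℤ) ^ (Paper.numParts l i)) ∧
    ((¬ ∃ i : ℕ, 1 ≤ i ∧ m = Paper.swR l i) → Paper.Rnum l m = 0) ∧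
    (Paper.Survivor l m ↔ ∃ i : ℕ, 1 ≤ i ∧ m = Paper.swR l i) ∧
    (Paper.Survivor l m → ∃! nu : ℕ → ℕ, nu ∈ Paper.RSet l m) := by
  classical
  have part3fwd : Paper.Survivor l m → ∃ i, 1 ≤ i ∧ m = Paper.swR l i :=
    Paper.survivor_swR hl hm
  have part1 : ∀ i : ℕ, 1 ≤ i → m = Paper.swR l i →
      Paper.Rnum l m = (-1 : ℤ) ^ (Paper.numParts l i) := by
    intro i hi hmi
    exact (Paper.swR_main hl hi hmi).2.2
  refine ⟨part1, ?_, ⟨part3fwd, ?_⟩, ?_⟩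
  · intro hno
    by_cases hne : (Paper.RSet l m).Nonempty
    · by_cases hba : ∃ r c, Paper.Ambiguous l m r c
      · obtain ⟨r, c, hrc⟩ := hba
        exact Paper.rnum_zero_amb hl hrc
      · push_neg at hba
        exact absurd (part3fwd ⟨hne, hba⟩) hno
    · rw [Set.not_nonempty_iff_eq_empty] at hne
      simp only [Paper.Rnum, hne]
      exact finsum_mem_empty
  · rintro ⟨i, hi, hmi⟩
    obtain ⟨hset, hamb, -⟩ := Paper.swR_main hl hi hmi
    refine ⟨?_, hamb⟩
    rw [hset]
    exact ⟨_, rfl⟩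
  · intro hs
    obtain ⟨i, hi, hmi⟩ := part3fwd hs
    obtain ⟨hset, -, -⟩ := Paper.swR_main hl hi hmi
    refine ⟨fun k => if k < Paper.numParts l i then l k - 1 else l k, ?_, ?_⟩
    · rw [hset]; rfl
    · intro nu hnu
      rw [hset] at hnu
      exact hnu
end
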